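/- Define d₀ = 1/√2, r₀ = 1/2, d_{n+1} = (1 − √(1−dₙ²))/(1 + √(1−dₙ²)), r_{n+1} = (1+d_{n+1})²·rₙ − 2^{n+1}·d_{n+1}. Then rₙ → 1/π. -/

import Mathlib

theorem borwein_quadratic (a b : ℕ → ℝ) (M : ℝ)
    (ha0 : a 0 = 1) (hb0 : b 0 = 1 / Real.sqrt 2)
    (ha : ∀ n, a (n + 1) = (a n + b n) / 2)
    (hb : ∀ n, b (n + 1) = Real.sqrt (a n * b n))
    (hMa : Filter.Tendsto a Filter.atTop (nhds M))
    (hMb : Filter.Tendsto b Filter.atTop (nhds M))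
    (hGauss : ∑' k : ℕ, (2 : ℝ) ^ k * (a k ^ 2 - b k ^ 2) = 1 - 2 * M ^ 2 / Real.pi)
    (d r : ℕ → ℝ)
    (hd0 : d 0 = 1 / Real.sqrt 2) (hr0 : r 0 = 1 / 2)
    (hd : ∀ n, d (n + 1) =
      (1 - Real.sqrt (1 - d n ^ 2)) / (1 + Real.sqrt (1 - d n ^ 2)))
    (hr : ∀ n, r (n + 1) = (1 + d (n + 1)) ^ 2 * r n - 2 ^ (n + 1) * d (n + 1)) :
    Filter.Tendsto r Filter.atTop (nhds (1 / Real.pi)) := by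
  have hs2 : (0:ℝ) < Real.sqrt 2 := Real.sqrt_pos.mpr (by norm_num)
  have hs2le : Real.sqrt 2 ≤ 2 := by
    nlinarith [Real.sq_sqrt (by norm_num : (2:ℝ) ≥ 0), Real.sqrt_nonneg 2]
  have hs2ge : (1:ℝ) ≤ Real.sqrt 2 := by
    nlinarith [Real.sq_sqrt (by norm_num : (2:ℝ) ≥ 0), Real.sqrt_nonneg 2]
  have hhalf : (1:ℝ)/2 ≤ 1 / Real.sqrt 2 := by
    rw [div_le_div_iff₀ (by norm_num) hs2]; linarith
  -- basic bounds
  have hbase : ∀ n, 1 / Real.sqrt 2 ≤ b n ∧ b n ≤ a n ∧ a n ≤ 1 := by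
    intro n
    induction n with
    | zero =>
      refine ⟨le_of_eq hb0.symm, ?_, le_of_eq ha0⟩
      rw [ha0, hb0, div_le_one hs2]; exact hs2ge
    | succ n ih =>
      obtain ⟨h1, h2, h3⟩ := ih
      have hbp : 0 < b n := lt_of_lt_of_le (by positivity) h1
      have hap : 0 < a n := lt_of_lt_of_le hbp h2
      refine ⟨?_, ?_, ?_⟩
      · rw [hb]
        calc 1 / Real.sqrt 2 ≤ b n := h1
          _ = Real.sqrt (b n * b n) := (Real.sqrt_mul_self hbp.le).symm
          _ ≤ Real.sqrt (a n * b n) := Real.sqrt_le_sqrt (by nlinarith)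
      · rw [hb, ha]
        have h4 : Real.sqrt (a n * b n) ≤ Real.sqrt (((a n + b n)/2)^2) :=
          Real.sqrt_le_sqrt (by nlinarith)
        rwa [Real.sqrt_sq (by positivity)] at h4
      · rw [ha]; linarith
  have hbpos : ∀ n, 0 < b n := fun n => lt_of_lt_of_le (by positivity) (hbase n).1
  have hapos : ∀ n, 0 < a n := fun n => lt_of_lt_of_le (hbpos n) (hbase n).2.1
  -- d invariant
  have hdinv : ∀ n, d n = Real.sqrt (a n ^ 2 - b n ^ 2) / a n := by
    intro n
    induction n with
    | zero =>
      rw [hd0, ha0, hb0]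
      rw [div_pow, one_pow, Real.sq_sqrt (by norm_num : (2:ℝ) ≥ 0)]
      rw [show (1:ℝ) - 1/2 = (2:ℝ)⁻¹ by norm_num, Real.sqrt_inv, div_one, one_div]
    | succ n ih =>
      have hab : b n ≤ a n := (hbase n).2.1
      have hbp := hbpos n
      have hap := hapos n
      have hane : a n ≠ 0 := hap.ne'
      have h1 : d n ^ 2 = (a n ^ 2 - b n ^ 2) / a n ^ 2 := by
        rw [ih, div_pow, Real.sq_sqrt (by nlinarith)]
      have h2 : Real.sqrt (1 - d n ^ 2) = b n / a n := by
        rw [h1]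
        have h5 : 1 - (a n ^ 2 - b n ^ 2) / a n ^ 2 = (b n / a n) ^ 2 := by
          field_simp
          ring
        rw [h5, Real.sqrt_sq (by positivity)]
      have h6 : Real.sqrt (a (n+1) ^ 2 - b (n+1) ^ 2) = (a n - b n) / 2 := by
        rw [ha, hb, Real.sq_sqrt (by nlinarith)]
        rw [show ((a n + b n)/2)^2 - a n * b n = ((a n - b n)/2)^2 by ring]
        exact Real.sqrt_sq (by linarith)
      rw [hd, h2, h6, ha]
      rw [div_eq_div_iff (by positivity) (by positivity)]
      field_simp
  have hdnext : ∀ n, d (n + 1) = (a n - b n) / (a n + b n) := by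
    intro n
    have hab : b n ≤ a n := (hbase n).2.1
    rw [hdinv (n+1)]
    have h6 : Real.sqrt (a (n+1) ^ 2 - b (n+1) ^ 2) = (a n - b n) / 2 := by
      rw [ha, hb, Real.sq_sqrt (mul_nonneg (hapos n).le (hbpos n).le)]
      rw [show ((a n + b n)/2)^2 - a n * b n = ((a n - b n)/2)^2 by ring]
      exact Real.sqrt_sq (by linarith)
    rw [h6, ha]
    rw [div_div_div_cancel_right₀] <;> norm_num
  -- r invariant
  have hrinv : ∀ n, r n =
      (1 - ∑ k ∈ Finset.range n, (2:ℝ) ^ k * (a k ^ 2 - b k ^ 2)) / (2 * a n ^ 2) := by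
    intro n
    induction n with
    | zero => simp [hr0, ha0]
    | succ n ih =>
      have hbp := hbpos n
      have hap := hapos n
      rw [hr, ih, hdnext n, Finset.sum_range_succ, ha]
      have h7 : a n + b n ≠ 0 := by positivity
      field_simp
      ring
  -- summability
  have hdiff : ∀ n, a n - b n ≤ (1/4:ℝ)^n := by
    intro n
    induction n with
    | zero =>
      rw [ha0, hb0]
      simp only [pow_zero]
      have : 0 < 1 / Real.sqrt 2 := by positivity
      linarith
    | succ n ih =>
      obtain ⟨h1, h2, h3⟩ := hbase n
      have hbp := hbpos n
      have hap := hapos n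
      have hb2 : (1:ℝ)/2 ≤ b n := le_trans hhalf h1
      have hkey : (a n + 3 * b n) / 4 ≤ Real.sqrt (a n * b n) := by
        have h8 : Real.sqrt (((a n + 3*b n)/4)^2) ≤ Real.sqrt (a n * b n) :=
          Real.sqrt_le_sqrt (by nlinarith)
        rwa [Real.sqrt_sq (by positivity)] at h8
      rw [ha, hb]
      calc (a n + b n)/2 - Real.sqrt (a n * b n) ≤ (a n + b n)/2 - (a n + 3*b n)/4 := by
            linarith
        _ = (a n - b n)/4 := by ring
        _ ≤ (1/4:ℝ)^n / 4 := by linarith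
        _ = (1/4:ℝ)^(n+1) := by ring
  have hsummable : Summable (fun k => (2:ℝ) ^ k * (a k ^ 2 - b k ^ 2)) := by
    refine Summable.of_nonneg_of_le
      (fun k => mul_nonneg (pow_nonneg (by norm_num) k)
        (by nlinarith [(hbase k).2.1, (hbpos k).le]))
      (fun k => ?_)
      ((summable_geometric_of_lt_one (r := (1/2:ℝ)) (by norm_num) (by norm_num)).mul_left 2)
    obtain ⟨h1, h2, h3⟩ := hbase k
    have hbp := hbpos k
    have hpow : (2:ℝ)^k * (1/4:ℝ)^k = (1/2:ℝ)^k := by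
      rw [← mul_pow]; norm_num
    have h2k : (0:ℝ) < 2^k := by positivity
    calc (2:ℝ)^k * (a k ^ 2 - b k ^ 2) = (2^k * (a k - b k)) * (a k + b k) := by ring
      _ ≤ (2^k * (1/4:ℝ)^k) * 2 := by
          apply mul_le_mul
          · exact mul_le_mul_of_nonneg_left (hdiff k) h2k.le
          · linarith
          · linarith
          · positivity
      _ = 2 * (1/2:ℝ)^k := by rw [hpow]; ring
  -- limits
  have hM : 1 / Real.sqrt 2 ≤ M :=
    ge_of_tendsto hMb (Filter.Eventually.of_forall fun n => (hbase n).1)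
  have hMpos : 0 < M := lt_of_lt_of_le (by positivity) hM
  have hP : Filter.Tendsto (fun n => ∑ k ∈ Finset.range n, (2:ℝ) ^ k * (a k ^ 2 - b k ^ 2))
      Filter.atTop (nhds (1 - 2 * M ^ 2 / Real.pi)) := by
    rw [← hGauss]
    exact hsummable.hasSum.tendsto_sum_nat
  have hden : Filter.Tendsto (fun n => 2 * a n ^ 2) Filter.atTop (nhds (2 * M ^ 2)) :=
    (hMa.pow 2).const_mul 2
  have hfinal : Filter.Tendsto
      (fun n => (1 - ∑ k ∈ Finset.range n, (2:ℝ) ^ k * (a k ^ 2 - b k ^ 2)) / (2 * a n ^ 2))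
      Filter.atTop (nhds ((1 - (1 - 2 * M ^ 2 / Real.pi)) / (2 * M ^ 2))) :=
    ((tendsto_const_nhds (x := (1:ℝ))).sub hP).div hden (mul_pos two_pos (pow_pos hMpos 2)).ne'
  have heq : (1 - (1 - 2 * M ^ 2 / Real.pi)) / (2 * M ^ 2) = 1 / Real.pi := by
    have hpi := Real.pi_pos
    field_simp
    ring
  rw [← heq]
  exact hfinal.congr fun n => (hrinv n).symm
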